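/- There exists a HyperLTL sentence φ_bounded over AP ∪ {$} of the form ∀π,π′.ψ with ψ quantifier-free (a Π₁-sentence) such that for every set T of traces over AP ∪ {$}: T ⊨ φ_bounded if and only if T is bounded, i.e. there exists b ∈ ℕ such that every trace t ∈ T satisfies t(i) ⊆ AP for all i < b and t(i) = {$} for all i ≥ b. -/

import Mathlib

/-! ### HyperLTL: syntax and semantics -/

/-- A trace over a set `AP` of atomic propositions. -/
abbrev Trace (AP : Type) : Type := ℕ → Set AP

/-- The suffix of a trace from position `j` onwards. -/
def Trace.shift {AP : Type} (t : Trace AP) (j : ℕ) : Trace AP := fun i => t (i + j)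

/-- Quantifier-free HyperLTL formulas; trace variables are natural numbers. -/
inductive QF (AP : Type) : Type where
  | atom : AP → ℕ → QF AP
  | neg  : QF AP → QF AP
  | disj : QF AP → QF AP → QF AP
  | next : QF AP → QF AP
  | untl : QF AP → QF AP → QF AP

/-- HyperLTL formulas: a block of trace quantifiers followed by a
quantifier-free formula (HyperLTL formulas are in prenex normal form). -/
inductive HFormula (AP : Type) : Type where
  | ex  : ℕ → HFormula AP → HFormula AP
  | all : ℕ → HFormula AP → HFormula AP
  | qf  : QF AP → HFormula AP

/-- The simultaneous shift of a trace assignment. -/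
def shiftAsg {AP : Type} (As : ℕ → Trace AP) (j : ℕ) : ℕ → Trace AP :=
  fun x => Trace.shift (As x) j

/-- Semantics of quantifier-free HyperLTL formulas w.r.t. a trace assignment. -/
def QF.sat {AP : Type} : QF AP → (ℕ → Trace AP) → Prop
  | .atom a x, As => a ∈ As x 0
  | .neg ψ, As => ¬ ψ.sat As
  | .disj ψ₁ ψ₂, As => ψ₁.sat As ∨ ψ₂.sat As
  | .next ψ, As => ψ.sat (shiftAsg As 1)
  | .untl ψ₁ ψ₂, As => ∃ j, ψ₂.sat (shiftAsg As j) ∧ ∀ j' < j, ψ₁.sat (shiftAsg As j')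

/-- Semantics of HyperLTL formulas w.r.t. a set of traces and a trace assignment. -/
def HFormula.sat {AP : Type} : HFormula AP → Set (Trace AP) → (ℕ → Trace AP) → Prop
  | .ex x φ, T, As => ∃ t ∈ T, φ.sat T (Function.update As x t)
  | .all x φ, T, As => ∀ t ∈ T, φ.sat T (Function.update As x t)
  | .qf ψ, _, As => ψ.sat As

def QF.freeVars {AP : Type} : QF AP → Set ℕ
  | .atom _ x => {x}
  | .neg ψ => ψ.freeVars
  | .disj ψ₁ ψ₂ => ψ₁.freeVars ∪ ψ₂.freeVars
  | .next ψ => ψ.freeVars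
  | .untl ψ₁ ψ₂ => ψ₁.freeVars ∪ ψ₂.freeVars

def HFormula.freeVars {AP : Type} : HFormula AP → Set ℕ
  | .ex x φ => φ.freeVars \ {x}
  | .all x φ => φ.freeVars \ {x}
  | .qf ψ => ψ.freeVars

/-- A sentence is a formula without free variables. -/
def HFormula.IsSentence {AP : Type} (φ : HFormula AP) : Prop := φ.freeVars = ∅

/-- `T` is a model of `φ` (for sentences the initial assignment is irrelevant). -/
def HModels {AP : Type} (T : Set (Trace AP)) (φ : HFormula AP) : Prop :=
  φ.sat T (fun _ _ => ∅)

/-- A HyperLTL sentence is satisfiable if it has a model. -/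
def HSatisfiable {AP : Type} (φ : HFormula AP) : Prop := ∃ T, HModels T φ

/-- A set of traces over `AP ∪ {$}` (with `$` rendered as `none`) is bounded:
for some `b`, every trace consists of `b` letters in `2^AP` followed by `{$}^ω`. -/
def BoundedTraces {AP : Type} (T : Set (Trace (Option AP))) : Prop :=
  ∃ b : ℕ, ∀ t ∈ T, (∀ i < b, none ∉ t i) ∧ ∀ i, b ≤ i → t i = {none}

section Aux
variable {AP : Type}

def qTru (x : ℕ) : QF (Option AP) := .disj (.atom none x) (.neg (.atom none x))
def qFls (x : ℕ) : QF (Option AP) := .neg (qTru x)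
def qConj (p q : QF (Option AP)) : QF (Option AP) := .neg (.disj (.neg p) (.neg q))
def qG (x : ℕ) (p : QF (Option AP)) : QF (Option AP) := .neg (.untl (qTru x) (.neg p))
def qBigOr (x : ℕ) (l : List AP) : QF (Option AP) :=
  l.foldr (fun a φ => .disj (.atom (some a) x) φ) (qFls x)
noncomputable def qNoneOnly [Fintype AP] (x : ℕ) : QF (Option AP) :=
  qConj (.atom none x) (.neg (qBigOr x Finset.univ.toList))
noncomputable def qSingle [Fintype AP] : QF (Option AP) :=
  QF.untl (.neg (.atom none 0)) (qG 0 (qNoneOnly 0))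
def qSync : QF (Option AP) :=
  qG 0 (qConj (.disj (.neg (.atom none 0)) (.atom none 1))
              (.disj (.neg (.atom none 1)) (.atom none 0)))
noncomputable def qPsi [Fintype AP] : QF (Option AP) := qConj qSingle qSync

lemma shiftAsg_shiftAsg (As : ℕ → Trace (Option AP)) (j k : ℕ) :
    shiftAsg (shiftAsg As j) k = shiftAsg As (k + j) := by
  funext x i; simp [shiftAsg, Trace.shift, Nat.add_assoc]

lemma qTru_sat (x : ℕ) (As : ℕ → Trace (Option AP)) : (qTru x).sat As := by
  simp [qTru, QF.sat]; tauto

lemma qConj_sat (p q : QF (Option AP)) (As : ℕ → Trace (Option AP)) :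
    (qConj p q).sat As ↔ p.sat As ∧ q.sat As := by
  simp [qConj, QF.sat]

lemma qG_sat (x : ℕ) (p : QF (Option AP)) (As : ℕ → Trace (Option AP)) :
    (qG x p).sat As ↔ ∀ j, p.sat (shiftAsg As j) := by
  constructor
  · intro h j
    by_contra hc
    exact h ⟨j, hc, fun j' _ => qTru_sat x _⟩
  · intro h ⟨j, hj, _⟩
    exact hj (h j)

lemma qBigOr_sat (x : ℕ) (l : List AP) (As : ℕ → Trace (Option AP)) :
    (qBigOr x l).sat As ↔ ∃ a ∈ l, some a ∈ As x 0 := by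
  induction l with
  | nil => simp [qBigOr, qFls, QF.sat, qTru_sat]
  | cons a l ih => simp [qBigOr, QF.sat] at ih ⊢; rw [ih]

lemma qNoneOnly_sat [Fintype AP] (x : ℕ) (As : ℕ → Trace (Option AP)) :
    (qNoneOnly x).sat As ↔ As x 0 = {none} := by
  rw [qNoneOnly, qConj_sat]
  show (none ∈ As x 0 ∧ ¬ (qBigOr x _).sat As) ↔ _
  rw [qBigOr_sat]
  constructor
  · rintro ⟨h1, h2⟩
    ext z
    cases z with
    | none => simpa using h1
    | some a => simp; intro hz; exact h2 ⟨a, by simp, hz⟩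
  · intro h; rw [h]; simp

lemma qBigOr_fv (x : ℕ) (l : List AP) : (qBigOr x l).freeVars = {x} := by
  induction l with
  | nil => simp [qBigOr, qFls, qTru, QF.freeVars]
  | cons a l ih => simp [qBigOr, QF.freeVars] at ih ⊢; rw [ih]; simp

lemma qPsi_fv [Fintype AP] : (qPsi (AP := AP)).freeVars ⊆ {0, 1} := by
  simp [qPsi, qSingle, qSync, qConj, qG, qTru, qNoneOnly, QF.freeVars, qBigOr_fv]
  intro n hn
  simp at hn ⊢
  tauto

end Aux

lemma untl_sat {X : Type} (p q : QF X) (As : ℕ → Trace X) :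
    (QF.untl p q).sat As ↔
      ∃ j, q.sat (shiftAsg As j) ∧ ∀ j' < j, p.sat (shiftAsg As j') := Iff.rfl

lemma qSingle_sat {AP : Type} [Fintype AP] (A : ℕ → Trace (Option AP)) :
    (qSingle (AP := AP)).sat A ↔
      ∃ j, (∀ k, A 0 (k + j) = {none}) ∧ ∀ j' < j, none ∉ A 0 j' := by
  rw [qSingle, untl_sat]
  refine exists_congr fun j => and_congr ?_ ?_
  · rw [qG_sat]
    refine forall_congr' fun k => ?_
    rw [shiftAsg_shiftAsg, qNoneOnly_sat]
    simp [shiftAsg, Trace.shift]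
  · refine forall_congr' fun j' => imp_congr Iff.rfl ?_
    simp [QF.sat, shiftAsg, Trace.shift]

lemma qSync_sat {AP : Type} (A : ℕ → Trace (Option AP)) :
    (qSync (AP := AP)).sat A ↔ ∀ k, (none ∈ A 0 k ↔ none ∈ A 1 k) := by
  rw [qSync, qG_sat]
  refine forall_congr' fun k => ?_
  rw [qConj_sat]
  simp only [QF.sat, shiftAsg, Trace.shift, Nat.zero_add]
  tauto

/-- **Definability of boundedness by a Π₁-sentence**: there is a HyperLTL
sentence of the form `∀π.∀π'. ψ` with `ψ` quantifier-free whose models are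
exactly the bounded sets of traces. -/
theorem bounded_definable_Pi1 (AP : Type) [Fintype AP] :
    ∃ (x y : ℕ) (ψ : QF (Option AP)),
      (HFormula.all x (HFormula.all y (HFormula.qf ψ))).IsSentence ∧
      ∀ T : Set (Trace (Option AP)),
        HModels T (HFormula.all x (HFormula.all y (HFormula.qf ψ))) ↔
          BoundedTraces T := by
  refine ⟨0, 1, qPsi, ?_, ?_⟩
  · unfold HFormula.IsSentence
    ext n
    simp only [HFormula.freeVars, Set.mem_diff, Set.mem_singleton_iff,
      Set.mem_empty_iff_false, iff_false]
    rintro ⟨⟨hn, h1⟩, h0⟩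
    have hm := qPsi_fv hn
    simp only [Set.mem_insert_iff, Set.mem_singleton_iff] at hm
    tauto
  · intro T
    have key : HModels T (HFormula.all 0 (HFormula.all 1 (HFormula.qf (qPsi (AP := AP))))) ↔
        ∀ t ∈ T, ∀ t' ∈ T,
          ((∃ j, (∀ k, t (k + j) = {none}) ∧ ∀ j' < j, none ∉ t j') ∧
            ∀ k, (none ∈ t k ↔ none ∈ t' k)) := by
      simp [HModels, HFormula.sat, qPsi, qConj_sat, qSingle_sat, qSync_sat,
        Function.update]
    rw [key]
    constructor
    · intro h
      rcases Set.eq_empty_or_nonempty T with rfl | ⟨t₀, ht₀⟩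
      · exact ⟨0, by simp⟩
      obtain ⟨⟨b, hb1, hb2⟩, -⟩ := h t₀ ht₀ t₀ ht₀
      refine ⟨b, fun t ht => ?_⟩
      obtain ⟨⟨j, hj1, hj2⟩, hsync⟩ := h t ht t₀ ht₀
      constructor
      · intro i hi hni
        exact hb2 i hi ((hsync i).1 hni)
      · intro i hbi
        have h0 : none ∈ t₀ i := by
          have hx := hb1 (i - b)
          rw [Nat.sub_add_cancel hbi] at hx
          rw [hx]; exact rfl
        have hti : none ∈ t i := (hsync i).2 h0
        have hji : j ≤ i := by
          by_contra hc
          exact hj2 i (lt_of_not_ge hc) hti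
        have hx := hj1 (i - j)
        rwa [Nat.sub_add_cancel hji] at hx
    · rintro ⟨b, hb⟩ t ht t' ht'
      obtain ⟨hb1, hb2⟩ := hb t ht
      obtain ⟨hb1', hb2'⟩ := hb t' ht'
      refine ⟨⟨b, fun k => hb2 _ (Nat.le_add_left b k), hb1⟩, fun k => ?_⟩
      constructor <;> intro hk
      · by_cases hkb : b ≤ k
        · rw [hb2' k hkb]; exact rfl
        · exact absurd hk (hb1 k (lt_of_not_ge hkb))
      · by_cases hkb : b ≤ k
        · rw [hb2 k hkb]; exact rfl
        · exact absurd hk (hb1' k (lt_of_not_ge hkb))
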